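/- Suppose σ_i ≥ 1 for all 1 ≤ i ≤ r. If v ∈ L has the form v = −e_k + Σ_{i∈A} e_i for some 1 ≤ k ≤ r and some subset A ⊆ {−1, 0, 1, …, k−1}, then v is irreducible. -/

import Mathlib

open Finset

/-- The standard basis vector `e j` of `ℤ^{r+2}`, realised as a function
`ℤ → ℤ` (only indices `-1, 0, 1, …, r` are used). -/
def stdE (j : ℤ) : ℤ → ℤ := fun i => if i = j then 1 else 0

/-- The vector `σ = e₀ + σ₁e₁ + ⋯ + σᵣeᵣ`. -/
def sigmaVec (r : ℤ) (σ : ℤ → ℤ) : ℤ → ℤ :=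
  fun i => if i = 0 then 1 else if 1 ≤ i ∧ i ≤ r then σ i else 0

/-- The vector `ρ = e₋₁ − e₀`. -/
def rhoVec : ℤ → ℤ := fun i => stdE (-1) i - stdE 0 i

/-- The standard inner product on `ℤ^{r+2}` (coordinates `-1, 0, 1, …, r`). -/
noncomputable def ip (r : ℤ) (x y : ℤ → ℤ) : ℤ := ∑ i ∈ Finset.Icc (-1) r, x i * y i

/-- The change-maker condition on `σ₁, …, σᵣ`:
`0 ≤ σ₁ ≤ 1` and `σ_{i−1} ≤ σ_i ≤ σ₁ + ⋯ + σ_{i−1} + 1` for `1 < i ≤ r`. -/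
def ChangeMaker (r : ℤ) (σ : ℤ → ℤ) : Prop :=
  0 ≤ σ 1 ∧ σ 1 ≤ 1 ∧ ∀ i, 1 < i → i ≤ r →
    σ (i - 1) ≤ σ i ∧ σ i ≤ (∑ j ∈ Finset.Icc 1 (i - 1), σ j) + 1

/-- Membership in the change-maker lattice
`L = {v ∈ ℤ^{r+2} : v·σ = v·ρ = 0}`. -/
def memCM (r : ℤ) (σ : ℤ → ℤ) (x : ℤ → ℤ) : Prop :=
  (∀ i, i ∉ Finset.Icc (-1) r → x i = 0) ∧
    ip r x (sigmaVec r σ) = 0 ∧ ip r x rhoVec = 0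

/-- A vector `v ∈ L` is irreducible if there are no nonzero `x, y ∈ L` with
`v = x + y` and `x·y ≥ 0`. -/
def IrredCM (r : ℤ) (σ : ℤ → ℤ) (v : ℤ → ℤ) : Prop :=
  ¬ ∃ x y : ℤ → ℤ, memCM r σ x ∧ memCM r σ y ∧ x ≠ 0 ∧ y ≠ 0 ∧
    v = x + y ∧ 0 ≤ ip r x y

/-- A subset `S` of `ℤ^{r+2}` is indecomposable if it is not an orthogonal
direct sum of two nonzero subgroups. -/
def IndecompCM (r : ℤ) (S : Set (ℤ → ℤ)) : Prop :=
  ¬ ∃ L1 L2 : AddSubgroup (ℤ → ℤ), (L1 : Set (ℤ → ℤ)) ⊆ S ∧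
    (L2 : Set (ℤ → ℤ)) ⊆ S ∧ L1 ≠ ⊥ ∧ L2 ≠ ⊥ ∧ L1 ⊓ L2 = ⊥ ∧
    (∀ x ∈ S, ∃ a ∈ L1, ∃ b ∈ L2, x = a + b) ∧
    (∀ x ∈ L1, ∀ y ∈ L2, ip r x y = 0)

lemma cmNonneg (r : ℤ) (hr : 1 ≤ r) (σ : ℤ → ℤ)
    (hpos : ∀ i, 1 ≤ i → i ≤ r → 1 ≤ σ i)
    (y : ℤ → ℤ) (hy : memCM r σ y) (hnn : ∀ i, 0 ≤ y i) : y = 0 := by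
  obtain ⟨hsupp, hσ, hρ⟩ := hy
  have hσnn : ∀ i, 0 ≤ sigmaVec r σ i := by
    intro i; unfold sigmaVec
    split_ifs with h1 h2
    · norm_num
    · linarith [hpos i h2.1 h2.2]
    · norm_num
  have hterm : ∀ i ∈ Finset.Icc (-1) r, 0 ≤ y i * sigmaVec r σ i :=
    fun i _ => mul_nonneg (hnn i) (hσnn i)
  have hz : ∀ i ∈ Finset.Icc (-1) r, y i * sigmaVec r σ i = 0 :=
    (Finset.sum_eq_zero_iff_of_nonneg hterm).mp hσ
  have hz' : ∀ i, 0 ≤ i → i ≤ r → y i = 0 := by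
    intro i h0 hir
    have hmem : i ∈ Finset.Icc (-1) r := by simp [Finset.mem_Icc]; omega
    have := hz i hmem
    rcases mul_eq_zero.mp this with h | h
    · exact h
    · exfalso
      unfold sigmaVec at h
      split_ifs at h with h1 h2
      · norm_num at h
      · linarith [hpos i h2.1 h2.2]
      · omega
  have hρ' : y (-1) = 0 := by
    have : ip r y rhoVec = y (-1) - y 0 := by
      unfold ip rhoVec stdE
      simp only [mul_sub, mul_ite, mul_one, mul_zero, Finset.sum_sub_distrib,
        Finset.sum_ite_eq', Finset.mem_Icc]
      rw [if_pos (by omega), if_pos (by omega)]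
    rw [this] at hρ
    have := hz' 0 le_rfl (by omega)
    omega
  funext i
  by_cases hi : i ∈ Finset.Icc (-1) r
  · simp only [Finset.mem_Icc] at hi
    rcases eq_or_lt_of_le hi.1 with h | h
    · simpa [← h] using hρ'
    · exact hz' i (by omega) hi.2
  · exact hsupp i hi


/-- Suppose `σᵢ ≥ 1` for all `1 ≤ i ≤ r`.  If `v ∈ L` has the form
`v = −e_k + ∑_{i∈A} e_i` with `1 ≤ k ≤ r` and `A ⊆ {−1, 0, 1, …, k−1}`,
then `v` is irreducible. -/
theorem stmt11 (r : ℤ) (hr : 1 ≤ r) (σ : ℤ → ℤ) (hcm : ChangeMaker r σ)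
    (hpos : ∀ i, 1 ≤ i → i ≤ r → 1 ≤ σ i)
    (k : ℤ) (hk1 : 1 ≤ k) (hkr : k ≤ r)
    (A : Finset ℤ) (hA : A ⊆ Finset.Icc (-1) (k - 1))
    (v : ℤ → ℤ) (hv : v = fun i => -(stdE k i) + ∑ j ∈ A, stdE j i)
    (hvL : memCM r σ v) :
    IrredCM r σ v := by
  rintro ⟨x, y, hx, hy, hx0, hy0, hsum, hip⟩
  have hkA : k ∉ A := fun h => by have := Finset.mem_Icc.mp (hA h); omega
  have hvi : ∀ i, v i = (if i ∈ A then 1 else 0) - (if i = k then 1 else 0) := by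
    intro i
    rw [hv]
    simp only [Finset.sum_ite_eq, stdE]
    ring
  have hvnn : ∀ i, i ≠ k → 0 ≤ v i := by
    intro i hik; rw [hvi i]; split_ifs <;> omega
  have hvb : ∀ i, -1 ≤ v i ∧ v i ≤ 1 := by
    intro i; rw [hvi i]; split_ifs <;> omega
  have hvxy : ∀ i, v i = x i + y i := fun i => congrFun hsum i
  have hle : ∀ i ∈ Finset.Icc (-1) r, x i * y i ≤ 0 := by
    intro i _
    by_contra h
    push_neg at h
    obtain ⟨hb1, hb2⟩ := hvb i
    have hs := hvxy i
    rcases mul_pos_iff.mp h with ⟨h1, h2⟩ | ⟨h1, h2⟩ <;> omega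
  have hip0 : ip r x y = 0 :=
    le_antisymm (Finset.sum_nonpos hle) hip
  have hz : ∀ i ∈ Finset.Icc (-1) r, x i * y i = 0 :=
    (Finset.sum_eq_zero_iff_of_nonpos hle).mp hip0
  have hcoord : ∀ i, x i = 0 ∨ y i = 0 := by
    intro i
    by_cases hi : i ∈ Finset.Icc (-1) r
    · exact mul_eq_zero.mp (hz i hi)
    · exact Or.inl (hx.1 i hi)
  rcases hcoord k with hxk | hyk
  · have hxnn : ∀ i, 0 ≤ x i := by
      intro i
      by_cases hik : i = k
      · rw [hik, hxk]
      · rcases hcoord i with h | h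
        · rw [h]
        · have := hvxy i
          have := hvnn i hik
          omega
    exact hx0 (cmNonneg r hr σ hpos x hx hxnn)
  · have hynn : ∀ i, 0 ≤ y i := by
      intro i
      by_cases hik : i = k
      · rw [hik, hyk]
      · rcases hcoord i with h | h
        · have := hvxy i
          have := hvnn i hik
          omega
        · rw [h]
    exact hy0 (cmNonneg r hr σ hpos y hy hynn)
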